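/- arXiv:1308.0105 — 3 statements merged into one kernel-verified Lean document; each statement's English description precedes it below -/
import Mathlib

section
/- Let a_1, a_2, a_3 be positive integers. The quotient ring ℂ[x_1,x_2,x_3]/(x_1 x_2, x_2 x_3, x_3 x_1, a_1 x_1^{a_1} - a_2 x_2^{a_2}, a_2 x_2^{a_2} - a_3 x_3^{a_3}) is a ℂ-vector space of dimension μ_A = a_1 + a_2 + a_3 - 1, with basis given by the residue classes of 1, x_i^j (i = 1,2,3, j = 1,...,a_i - 1), and x_1^{a_1}. -/
open MvPolynomial Finsupp

namespace Stmt4Aux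

abbrev Idx (a : Fin 3 → ℕ) := Unit ⊕ ((i : Fin 3) × Fin (a i - 1)) ⊕ Unit

noncomputable def rep (a : Fin 3 → ℕ) : Idx a → MvPolynomial (Fin 3) ℂ
  | .inl _ => 1
  | .inr (.inl ⟨i, j⟩) => X i ^ (j.val + 1)
  | .inr (.inr _) => X 0 ^ a 0

noncomputable def N (a : Fin 3 → ℕ) : MvPolynomial (Fin 3) ℂ →ₗ[ℂ] (Idx a → ℂ) :=
  LinearMap.pi fun b => match b with
    | .inl _ => lcoeff ℂ 0
    | .inr (.inl ⟨i, j⟩) => lcoeff ℂ (single i (j.val + 1))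
    | .inr (.inr _) =>
        ((a 1 : ℂ) * (a 2 : ℂ)) • lcoeff ℂ (single 0 (a 0)) +
        ((a 0 : ℂ) * (a 2 : ℂ)) • lcoeff ℂ (single 1 (a 1)) +
        ((a 0 : ℂ) * (a 1 : ℂ)) • lcoeff ℂ (single 2 (a 2))

noncomputable def w (a : Fin 3 → ℕ) : Idx a → ℂ
  | .inl _ => 1
  | .inr (.inl _) => 1
  | .inr (.inr _) => (a 1 : ℂ) * (a 2 : ℂ)

abbrev S (a : Fin 3 → ℕ) : Set (MvPolynomial (Fin 3) ℂ) :=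
  {X 0 * X 1, X 1 * X 2, X 2 * X 0,
    C (a 0 : ℂ) * X 0 ^ a 0 - C (a 1 : ℂ) * X 1 ^ a 1,
    C (a 1 : ℂ) * X 1 ^ a 1 - C (a 2 : ℂ) * X 2 ^ a 2}

/-! ### small Finsupp helpers -/

lemma sne {i i' : Fin 3} {k k' : ℕ} (h : i = i' → k ≠ k') (hk' : k' ≠ 0) :
    (single i k : Fin 3 →₀ ℕ) ≠ single i' k' := by
  rw [Ne, Finsupp.single_eq_single_iff]
  rintro (⟨rfl, rfl⟩ | ⟨h1, h2⟩)
  · exact h rfl rfl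
  · exact hk' h2

lemma snz {i : Fin 3} {k : ℕ} (h : k ≠ 0) : (single i k : Fin 3 →₀ ℕ) ≠ 0 :=
  fun h0 => h (Finsupp.single_eq_zero.mp h0)

lemma single_pair_zero {u v : Fin 3} (i : Fin 3) (huv : u ≠ v) (k : ℕ) :
    (single i k : Fin 3 →₀ ℕ) u = 0 ∨ (single i k : Fin 3 →₀ ℕ) v = 0 := by
  rcases eq_or_ne i u with rfl | h
  · right; simp [Finsupp.single_apply, huv]
  · left; simp [Finsupp.single_apply, h]

lemma not_single_le {u i : Fin 3} {n k : ℕ} (h : i = u → k < n) (hn : 0 < n) :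
    ¬ single u n ≤ (single i k : Fin 3 →₀ ℕ) := by
  rw [Finsupp.single_le_iff, Finsupp.single_apply]
  split_ifs with hi
  · have := h hi; omega
  · omega

lemma not_single_le_zero {u : Fin 3} {n : ℕ} (hn : 0 < n) :
    ¬ single u n ≤ (0 : Fin 3 →₀ ℕ) := by
  rw [Finsupp.single_le_iff]; simp; omega


lemma mixed_eq {u : Fin 3 →₀ ℕ} {i j : Fin 3} (hij : i ≠ j) (hi : u i ≠ 0) (hj : u j ≠ 0) :
    u = (u - single i 1 - single j 1) + (single i 1 + single j 1) := by
  ext k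
  simp only [Finsupp.coe_add, Finsupp.coe_tsub, Pi.add_apply, Pi.sub_apply,
    Finsupp.single_apply]
  by_cases h1 : i = k <;> by_cases h2 : j = k
  · exact absurd (h1.trans h2.symm) hij
  · rw [if_pos h1, if_neg h2]; have := hi; rw [h1] at this; omega
  · rw [if_neg h1, if_pos h2]; have := hj; rw [h2] at this; omega
  · rw [if_neg h1, if_neg h2]; omega

lemma eq_single0 {u : Fin 3 →₀ ℕ} (h1 : u 1 = 0) (h2 : u 2 = 0) :
    u = single (0 : Fin 3) (u 0) := by
  ext k; fin_cases k <;> simp [Finsupp.single_apply, h1, h2]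

lemma eq_single1 {u : Fin 3 →₀ ℕ} (h0 : u 0 = 0) (h2 : u 2 = 0) :
    u = single (1 : Fin 3) (u 1) := by
  ext k; fin_cases k <;> simp [Finsupp.single_apply, h0, h2]

lemma eq_single2 {u : Fin 3 →₀ ℕ} (h0 : u 0 = 0) (h1 : u 1 = 0) :
    u = single (2 : Fin 3) (u 2) := by
  ext k; fin_cases k <;> simp [Finsupp.single_apply, h0, h1]

/-! ### coefficient computations -/

lemma coeff_mul_X_pow' (m : Fin 3 →₀ ℕ) (i : Fin 3) (n : ℕ) (q : MvPolynomial (Fin 3) ℂ) :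
    coeff m (q * X i ^ n) = if single i n ≤ m then coeff (m - single i n) q else 0 := by
  rw [X_pow_eq_monomial, coeff_mul_monomial']
  split_ifs <;> simp

lemma Hpair (i j : Fin 3) (q : MvPolynomial (Fin 3) ℂ) (m : Fin 3 →₀ ℕ)
    (hm : m i = 0 ∨ m j = 0) : coeff m (q * (X i * X j)) = 0 := by
  rw [← mul_assoc, coeff_mul_X']
  by_cases hj : j ∈ m.support
  · rw [if_pos hj, coeff_mul_X', if_neg]
    have hmj : m j ≠ 0 := Finsupp.mem_support_iff.mp hj
    have hmi : m i = 0 := hm.resolve_right hmj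
    simp [Finsupp.mem_support_iff, Finsupp.tsub_apply, hmi]
  · rw [if_neg hj]

lemma Hbin (c c' : ℂ) (i i' : Fin 3) (n n' : ℕ) (q : MvPolynomial (Fin 3) ℂ)
    (m : Fin 3 →₀ ℕ) :
    coeff m (q * (C c * X i ^ n - C c' * X i' ^ n')) =
      c * (if single i n ≤ m then coeff (m - single i n) q else 0)
      - c' * (if single i' n' ≤ m then coeff (m - single i' n') q else 0) := by
  have h : q * (C c * X i ^ n - C c' * X i' ^ n')
      = C c * (q * X i ^ n) - C c' * (q * X i' ^ n') := by ring
  rw [h, coeff_sub, coeff_C_mul, coeff_C_mul, coeff_mul_X_pow', coeff_mul_X_pow']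

/-! ### N on representatives -/

lemma N_diag (a : Fin 3 → ℕ) (ha : ∀ i, 0 < a i) (b : Idx a) :
    N a (rep a b) b = w a b := by
  cases b with
  | inl u => simp [N, rep, w, LinearMap.pi_apply]
  | inr b =>
    cases b with
    | inl s =>
      obtain ⟨i, j⟩ := s
      simp [N, rep, w, LinearMap.pi_apply, X_pow_eq_monomial, coeff_monomial]
    | inr u =>
      simp [N, rep, w, LinearMap.pi_apply, X_pow_eq_monomial, coeff_monomial,
        Finsupp.single_eq_single_iff, (ha 0).ne', (ha 1).ne', (ha 2).ne']

lemma N_cross (a : Fin 3 → ℕ) (ha : ∀ i, 0 < a i) (b b' : Idx a) (hbb : b ≠ b') :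
    N a (rep a b) b' = 0 := by
  have hlt : ∀ (i : Fin 3) (j : Fin (a i - 1)), j.val + 1 < a i := by
    intro i j; have := j.2; have := ha i; omega
  simp only [N, rep, LinearMap.pi_apply]
  cases b with
  | inl u =>
    cases b' with
    | inl u' => exact absurd rfl hbb
    | inr b' =>
      cases b' with
      | inl s =>
        obtain ⟨i, j⟩ := s
        simp only [lcoeff_apply, coeff_one]
        rw [if_neg (snz (by omega)).symm]
      | inr u =>
        simp only [lcoeff_apply, LinearMap.add_apply, LinearMap.smul_apply, smul_eq_mul,
          coeff_one]
        rw [if_neg (snz (ha 0).ne').symm, if_neg (snz (ha 1).ne').symm,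
          if_neg (snz (ha 2).ne').symm]
        ring
  | inr b =>
    cases b with
    | inl s =>
      obtain ⟨i, j⟩ := s
      cases b' with
      | inl u' =>
        simp only [lcoeff_apply, X_pow_eq_monomial, coeff_monomial]
        rw [if_neg (snz (by omega))]
      | inr b' =>
        cases b' with
        | inl s' =>
          obtain ⟨i', j'⟩ := s'
          simp only [lcoeff_apply, X_pow_eq_monomial, coeff_monomial]
          refine if_neg (sne ?_ (by omega))
          rintro rfl h
          exact hbb (by congr 1; exact congrArg _ (congrArg _ (Fin.ext (by omega))))
        | inr u =>
          simp only [lcoeff_apply, LinearMap.add_apply, LinearMap.smul_apply, smul_eq_mul,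
            X_pow_eq_monomial, coeff_monomial]
          have h0 := hlt i j
          rw [if_neg (sne (by rintro rfl; omega) (ha 0).ne'),
            if_neg (sne (by rintro rfl; omega) (ha 1).ne'),
            if_neg (sne (by rintro rfl; omega) (ha 2).ne')]
          ring
    | inr u =>
      cases b' with
      | inl u' =>
        simp only [lcoeff_apply, X_pow_eq_monomial, coeff_monomial]
        rw [if_neg (snz (ha 0).ne')]
      | inr b' =>
        cases b' with
        | inl s' =>
          obtain ⟨i', j'⟩ := s'
          simp only [lcoeff_apply, X_pow_eq_monomial, coeff_monomial]
          have h0 := hlt i' j'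
          refine if_neg (sne ?_ (by omega))
          rintro rfl
          omega
        | inr u' => exact absurd rfl hbb

/-! ### N vanishes on the ideal -/

lemma N_gen_pair (a : Fin 3 → ℕ) (u v : Fin 3) (huv : u ≠ v)
    (q : MvPolynomial (Fin 3) ℂ) : N a (q * (X u * X v)) = 0 := by
  funext b
  simp only [N, LinearMap.pi_apply, Pi.zero_apply]
  cases b with
  | inl _ =>
    simp only [lcoeff_apply]
    exact Hpair u v q 0 (Or.inl rfl)
  | inr b =>
    cases b with
    | inl s =>
      obtain ⟨i, j⟩ := s
      simp only [lcoeff_apply]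
      exact Hpair u v q _ (single_pair_zero i huv _)
    | inr _ =>
      simp only [lcoeff_apply, LinearMap.add_apply, LinearMap.smul_apply, smul_eq_mul]
      rw [Hpair u v q _ (single_pair_zero 0 huv _),
        Hpair u v q _ (single_pair_zero 1 huv _),
        Hpair u v q _ (single_pair_zero 2 huv _)]
      ring

lemma N_gen_bin (a : Fin 3 → ℕ) (ha : ∀ i, 0 < a i) (u v : Fin 3) (huv : u ≠ v)
    (q : MvPolynomial (Fin 3) ℂ) :
    N a (q * (C (a u : ℂ) * X u ^ a u - C (a v : ℂ) * X v ^ a v)) = 0 := by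
  have hlt : ∀ (i : Fin 3) (j : Fin (a i - 1)), j.val + 1 < a i := by
    intro i j; have := j.2; have := ha i; omega
  funext b
  simp only [N, LinearMap.pi_apply, Pi.zero_apply]
  cases b with
  | inl _ =>
    simp only [lcoeff_apply]
    rw [Hbin, if_neg (not_single_le_zero (ha u)), if_neg (not_single_le_zero (ha v))]
    ring
  | inr b =>
    cases b with
    | inl s =>
      obtain ⟨i, j⟩ := s
      simp only [lcoeff_apply]
      have h0 := hlt i j
      rw [Hbin, if_neg (not_single_le (by rintro rfl; omega) (ha u)),
        if_neg (not_single_le (by rintro rfl; omega) (ha v))]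
      ring
    | inr _ =>
      simp only [lcoeff_apply, LinearMap.add_apply, LinearMap.smul_apply, smul_eq_mul]
      rw [Hbin, Hbin, Hbin]
      have key : ∀ i : Fin 3,
          (if single u (a u) ≤ single i (a i) then coeff (single i (a i) - single u (a u)) q
            else 0) = if u = i then coeff 0 q else 0 := by
        intro i
        rcases eq_or_ne u i with rfl | h
        · rw [if_pos le_rfl, tsub_self, if_pos rfl]
        · rw [if_neg (not_single_le (fun hh => absurd hh.symm h) (ha u)), if_neg h]
      have key' : ∀ i : Fin 3,
          (if single v (a v) ≤ single i (a i) then coeff (single i (a i) - single v (a v)) q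
            else 0) = if v = i then coeff 0 q else 0 := by
        intro i
        rcases eq_or_ne v i with rfl | h
        · rw [if_pos le_rfl, tsub_self, if_pos rfl]
        · rw [if_neg (not_single_le (fun hh => absurd hh.symm h) (ha v)), if_neg h]
      rw [key 0, key 1, key 2, key' 0, key' 1, key' 2]
      fin_cases u <;> fin_cases v <;> simp_all <;> ring

lemma N_ker (a : Fin 3 → ℕ) (ha : ∀ i, 0 < a i) {p : MvPolynomial (Fin 3) ℂ}
    (hp : p ∈ Ideal.span (S a)) : N a p = 0 := by
  have main : ∀ x ∈ Ideal.span (S a), ∀ q, N a (q * x) = 0 := by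
    intro x hx
    refine Submodule.span_induction ?_ ?_ ?_ ?_ hx
    · intro g hg q
      rcases hg with rfl | rfl | rfl | rfl | rfl
      · exact N_gen_pair a 0 1 (by decide) q
      · exact N_gen_pair a 1 2 (by decide) q
      · exact N_gen_pair a 2 0 (by decide) q
      · exact N_gen_bin a ha 0 1 (by decide) q
      · exact N_gen_bin a ha 1 2 (by decide) q
    · intro q; rw [mul_zero, map_zero]
    · intro x y _ _ hx hy q
      rw [mul_add, map_add, hx, hy, add_zero]
    · intro r x _ hx q
      rw [smul_eq_mul, ← mul_assoc]
      exact hx (q * r)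
  have := main p hp 1
  rwa [one_mul] at this

end Stmt4Aux

set_option maxHeartbeats 2000000 in
open Stmt4Aux in
open MvPolynomial in
theorem stmt_4 (a : Fin 3 → ℕ) (ha : ∀ i, 0 < a i)
    (I : Ideal (MvPolynomial (Fin 3) ℂ))
    (hI : I = Ideal.span {X 0 * X 1, X 1 * X 2, X 2 * X 0,
      C (a 0 : ℂ) * X 0 ^ a 0 - C (a 1 : ℂ) * X 1 ^ a 1,
      C (a 1 : ℂ) * X 1 ^ a 1 - C (a 2 : ℂ) * X 2 ^ a 2}) :
    Module.finrank ℂ (MvPolynomial (Fin 3) ℂ ⧸ I) = a 0 + a 1 + a 2 - 1 ∧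
    ∃ B : Module.Basis (Unit ⊕ ((i : Fin 3) × Fin (a i - 1)) ⊕ Unit) ℂ
        (MvPolynomial (Fin 3) ℂ ⧸ I),
      (B (Sum.inl ()) = Ideal.Quotient.mk I 1) ∧
      (∀ (i : Fin 3) (j : Fin (a i - 1)),
        B (Sum.inr (Sum.inl ⟨i, j⟩)) = Ideal.Quotient.mk I (X i ^ (j.val + 1))) ∧
      (B (Sum.inr (Sum.inr ())) = Ideal.Quotient.mk I (X 0 ^ a 0)) := by
  have hIS : I = Ideal.span (S a) := hI
  have hne : ∀ i, ((a i : ℂ)) ≠ 0 := fun i => Nat.cast_ne_zero.mpr (ha i).ne'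
  set v : Idx a → MvPolynomial (Fin 3) ℂ ⧸ I :=
    fun b => Ideal.Quotient.mk I (rep a b) with hv
  have mk_smul : ∀ (c : ℂ) (p : MvPolynomial (Fin 3) ℂ),
      Ideal.Quotient.mk I (c • p) = c • Ideal.Quotient.mk I p := by
    intro c p
    rw [← Ideal.Quotient.mkₐ_eq_mk ℂ, map_smul]
  have mk_C_mul : ∀ (c : ℂ) (p : MvPolynomial (Fin 3) ℂ),
      Ideal.Quotient.mk I (C c * p) = c • Ideal.Quotient.mk I p := by
    intro c p; rw [← smul_eq_C_mul, mk_smul]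
  -- membership of the generators
  have hg1 : (X 0 * X 1 : MvPolynomial (Fin 3) ℂ) ∈ I := by
    rw [hIS]; exact Ideal.subset_span (by simp [S])
  have hg2 : (X 1 * X 2 : MvPolynomial (Fin 3) ℂ) ∈ I := by
    rw [hIS]; exact Ideal.subset_span (by simp [S])
  have hg3 : (X 2 * X 0 : MvPolynomial (Fin 3) ℂ) ∈ I := by
    rw [hIS]; exact Ideal.subset_span (by simp [S])
  have hg4 : (C (a 0 : ℂ) * X 0 ^ a 0 - C (a 1 : ℂ) * X 1 ^ a 1 :
      MvPolynomial (Fin 3) ℂ) ∈ I := by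
    rw [hIS]; exact Ideal.subset_span (by simp [S])
  have hg5 : (C (a 1 : ℂ) * X 1 ^ a 1 - C (a 2 : ℂ) * X 2 ^ a 2 :
      MvPolynomial (Fin 3) ℂ) ∈ I := by
    rw [hIS]; exact Ideal.subset_span (by simp [S])
  have pair_mem : ∀ i j : Fin 3, i ≠ j → X i * X j ∈ I := by
    intro i j hij
    fin_cases i <;> fin_cases j <;>
      first
        | exact absurd rfl hij
        | exact hg1 | exact hg2 | exact hg3
        | (rw [mul_comm]; first | exact hg1 | exact hg2 | exact hg3)
  have hrel : ∀ i : Fin 3,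
      (C (a i : ℂ) * X i ^ a i - C (a 0 : ℂ) * X 0 ^ a 0 : MvPolynomial (Fin 3) ℂ) ∈ I := by
    intro i
    fin_cases i
    · show (C (a 0 : ℂ) * X 0 ^ a 0 - C (a 0 : ℂ) * X 0 ^ a 0 : MvPolynomial (Fin 3) ℂ) ∈ I
      simpa using zero_mem I
    · show (C (a 1 : ℂ) * X 1 ^ a 1 - C (a 0 : ℂ) * X 0 ^ a 0 : MvPolynomial (Fin 3) ℂ) ∈ I
      have := neg_mem hg4
      rwa [neg_sub] at this
    · show (C (a 2 : ℂ) * X 2 ^ a 2 - C (a 0 : ℂ) * X 0 ^ a 0 : MvPolynomial (Fin 3) ℂ) ∈ I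
      have h : (C (a 2 : ℂ) * X 2 ^ a 2 - C (a 0 : ℂ) * X 0 ^ a 0 : MvPolynomial (Fin 3) ℂ)
          = -(C (a 1 : ℂ) * X 1 ^ a 1 - C (a 2 : ℂ) * X 2 ^ a 2)
            + -(C (a 0 : ℂ) * X 0 ^ a 0 - C (a 1 : ℂ) * X 1 ^ a 1) := by ring
      rw [h]
      exact add_mem (neg_mem hg5) (neg_mem hg4)
  have hrel2 : ∀ i j : Fin 3,
      (C (a i : ℂ) * X i ^ a i - C (a j : ℂ) * X j ^ a j : MvPolynomial (Fin 3) ℂ) ∈ I := by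
    intro i j
    have h := sub_mem (hrel i) (hrel j)
    rwa [sub_sub_sub_cancel_right] at h
  have pow_big : ∀ (i : Fin 3) (k : ℕ), a i < k → (X i ^ k : MvPolynomial (Fin 3) ℂ) ∈ I := by
    intro i k hk
    obtain ⟨j, hij⟩ : ∃ j : Fin 3, j ≠ i := by
      refine ⟨if i = 0 then 1 else 0, ?_⟩
      split_ifs with h
      · rw [h]; decide
      · exact Ne.symm h
    have hid : (C (a i : ℂ) * X i ^ k : MvPolynomial (Fin 3) ℂ)
        = (X i ^ (k - a i - 1) * X i) * (C (a i : ℂ) * X i ^ a i - C (a j : ℂ) * X j ^ a j)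
          + (C (a j : ℂ) * X i ^ (k - a i - 1) * X j ^ (a j - 1)) * (X i * X j) := by
      obtain ⟨m, hm⟩ : ∃ m, a j = m + 1 := ⟨a j - 1, by have := ha j; omega⟩
      obtain ⟨t, ht⟩ : ∃ t, k = a i + 1 + t := ⟨k - a i - 1, by omega⟩
      have h1 : k - a i - 1 = t := by omega
      have h2 : a j - 1 = m := by omega
      rw [h1, h2, hm, ht]
      ring
    have h1 : (C (a i : ℂ) * X i ^ k : MvPolynomial (Fin 3) ℂ) ∈ I := by
      rw [hid]
      exact add_mem (Ideal.mul_mem_left _ _ (hrel2 i j))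
        (Ideal.mul_mem_left _ _ (pair_mem i j (Ne.symm hij)))
    have h2 : (X i ^ k : MvPolynomial (Fin 3) ℂ)
        = C ((a i : ℂ)⁻¹) * (C (a i : ℂ) * X i ^ k) := by
      rw [← mul_assoc, ← C_mul, inv_mul_cancel₀ (hne i), C_1, one_mul]
    rw [h2]
    exact Ideal.mul_mem_left _ _ h1
  have mixed_mem : ∀ (u : Fin 3 →₀ ℕ) (i j : Fin 3), i ≠ j → u i ≠ 0 → u j ≠ 0 →
      (monomial u 1 : MvPolynomial (Fin 3) ℂ) ∈ I := by
    intro u i j hij hi hj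
    have hu : u = (u - single i 1 - single j 1) + (single i 1 + single j 1) :=
      mixed_eq hij hi hj
    have hX : (X i * X j : MvPolynomial (Fin 3) ℂ) = monomial (single i 1 + single j 1) 1 := by
      rw [← pow_one (X i), ← pow_one (X j), X_pow_eq_monomial, X_pow_eq_monomial,
        monomial_mul, one_mul]
    have hmono : (monomial u 1 : MvPolynomial (Fin 3) ℂ)
        = monomial (u - single i 1 - single j 1) 1 * (X i * X j) := by
      rw [hX, monomial_mul, one_mul, ← hu]
    rw [hmono]
    exact Ideal.mul_mem_left _ _ (pair_mem i j hij)
  have Xpow_span : ∀ (i : Fin 3) (k : ℕ),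
      Ideal.Quotient.mk I (X i ^ k) ∈ Submodule.span ℂ (Set.range v) := by
    intro i k
    rcases Nat.lt_trichotomy k (a i) with hk | hk | hk
    · rcases Nat.eq_zero_or_pos k with rfl | hkpos
      · refine Submodule.subset_span ⟨Sum.inl (), ?_⟩
        show Ideal.Quotient.mk I (1 : MvPolynomial (Fin 3) ℂ) = _
        rw [pow_zero]
      · refine Submodule.subset_span ⟨Sum.inr (Sum.inl ⟨i, ⟨k - 1, by omega⟩⟩), ?_⟩
        show Ideal.Quotient.mk I (X i ^ (k - 1 + 1)) = _
        rw [Nat.sub_add_cancel hkpos]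
    · subst hk
      have hsub : (X i ^ a i - C ((a i : ℂ)⁻¹ * (a 0 : ℂ)) * X 0 ^ a 0 :
          MvPolynomial (Fin 3) ℂ) ∈ I := by
        have hid : (X i ^ a i - C ((a i : ℂ)⁻¹ * (a 0 : ℂ)) * X 0 ^ a 0 :
            MvPolynomial (Fin 3) ℂ)
            = C ((a i : ℂ)⁻¹) * (C (a i : ℂ) * X i ^ a i - C (a 0 : ℂ) * X 0 ^ a 0) := by
          rw [mul_sub, ← mul_assoc, ← mul_assoc, ← C_mul, ← C_mul,
            inv_mul_cancel₀ (hne i), C_1, one_mul]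
        rw [hid]
        exact Ideal.mul_mem_left _ _ (hrel i)
      have heq : Ideal.Quotient.mk I (X i ^ a i)
          = ((a i : ℂ)⁻¹ * (a 0 : ℂ)) • v (Sum.inr (Sum.inr ())) := by
        rw [hv, ← mk_C_mul]
        exact Ideal.Quotient.eq.mpr hsub
      rw [heq]
      exact Submodule.smul_mem _ _ (Submodule.subset_span ⟨_, rfl⟩)
    · rw [Ideal.Quotient.eq_zero_iff_mem.mpr (pow_big i k hk)]
      exact zero_mem _
  have hmono_span : ∀ u : Fin 3 →₀ ℕ,
      Ideal.Quotient.mk I (monomial u 1) ∈ Submodule.span ℂ (Set.range v) := by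
    intro u
    by_cases h0 : u 0 = 0 <;> by_cases h1 : u 1 = 0 <;> by_cases h2 : u 2 = 0
    · rw [eq_single0 h1 h2, ← X_pow_eq_monomial]; exact Xpow_span _ _
    · rw [eq_single2 h0 h1, ← X_pow_eq_monomial]; exact Xpow_span _ _
    · rw [eq_single1 h0 h2, ← X_pow_eq_monomial]; exact Xpow_span _ _
    · rw [Ideal.Quotient.eq_zero_iff_mem.mpr (mixed_mem u 1 2 (by decide) h1 h2)]
      exact zero_mem _
    · rw [eq_single0 h1 h2, ← X_pow_eq_monomial]; exact Xpow_span _ _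
    · rw [Ideal.Quotient.eq_zero_iff_mem.mpr (mixed_mem u 0 2 (by decide) h0 h2)]
      exact zero_mem _
    · rw [Ideal.Quotient.eq_zero_iff_mem.mpr (mixed_mem u 0 1 (by decide) h0 h1)]
      exact zero_mem _
    · rw [Ideal.Quotient.eq_zero_iff_mem.mpr (mixed_mem u 0 1 (by decide) h0 h1)]
      exact zero_mem _
  have hspan : ⊤ ≤ Submodule.span ℂ (Set.range v) := by
    rintro x -
    obtain ⟨p, rfl⟩ := Ideal.Quotient.mk_surjective x
    induction p using MvPolynomial.induction_on' with
    | monomial u c =>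
      have hmc : (monomial u c : MvPolynomial (Fin 3) ℂ) = C c * monomial u 1 := by
        rw [C_mul_monomial, mul_one]
      rw [hmc, mk_C_mul]
      exact Submodule.smul_mem _ _ (hmono_span u)
    | add p q hp hq =>
      rw [map_add]
      exact add_mem hp hq
  have hli : LinearIndependent ℂ v := by
    rw [Fintype.linearIndependent_iff]
    intro g hg b
    have hmk : Ideal.Quotient.mk I (∑ b', g b' • rep a b')
        = ∑ b', g b' • Ideal.Quotient.mk I (rep a b') := by
      rw [map_sum]
      refine Finset.sum_congr rfl fun b' _ => ?_
      rw [smul_eq_C_mul, mk_C_mul]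
    have hmem : (∑ b', g b' • rep a b') ∈ Ideal.span (S a) := by
      rw [← hIS, ← Ideal.Quotient.eq_zero_iff_mem, hmk]
      exact hg
    have hN := N_ker a ha hmem
    rw [map_sum] at hN
    simp only [LinearMap.map_smul] at hN
    have hNb := congrFun hN b
    rw [Finset.sum_apply, Finset.sum_eq_single b] at hNb
    · rw [Pi.smul_apply, N_diag a ha, smul_eq_mul, Pi.zero_apply] at hNb
      have hw : w a b ≠ 0 := by
        rcases b with _ | b
        · simp [w]
        · rcases b with b | _
          · simp [w]
          · exact mul_ne_zero (hne 1) (hne 2)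
      exact (mul_eq_zero.mp hNb).resolve_right hw
    · intro b' _ hb'
      rw [Pi.smul_apply, N_cross a ha b' b hb', smul_eq_mul, mul_zero]
    · intro hb
      exact absurd (Finset.mem_univ b) hb
  refine ⟨?_, Module.Basis.mk hli hspan, ?_, ?_, ?_⟩
  · rw [Module.finrank_eq_card_basis (Module.Basis.mk hli hspan)]
    have h0 := ha 0; have h1 := ha 1; have h2 := ha 2
    simp only [Fintype.card_sum, Fintype.card_sigma, Fintype.card_fin, Fintype.card_unit,
      Fin.sum_univ_three]
    omega
  · exact Module.Basis.mk_apply hli hspan (Sum.inl ())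
  · intro i j
    exact Module.Basis.mk_apply hli hspan (Sum.inr (Sum.inl ⟨i, j⟩))
  · exact Module.Basis.mk_apply hli hspan (Sum.inr (Sum.inr ()))
end

section
/- Fix a free module Q of finite rank over ℤ with basis {α_i^∨} and a symmetric bilinear pairing ⟨α_i, α_j^∨⟩ given by a generalized Cartan matrix C of a tree-shaped diagram T_{a_1,a_2,a_3} (three legs of lengths a_1-1, a_2-1, a_3-1 attached to a central node). The determinant of this Cartan matrix equals a_1 a_2 a_3 (1/a_1 + 1/a_2 + 1/a_3 - 1) = a_2 a_3 + a_1 a_3 + a_1 a_2 - a_1 a_2 a_3; in particular the matrix is nondegenerate if and only if χ_A = 1/a_1 + 1/a_2 + 1/a_3 - 1 ≠ 0. -/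
/-- Vertex set of the star-shaped diagram `T_{a₁,a₂,a₃}`: a central vertex
and three legs with `a i - 1` vertices. -/
abbrev starVertex (a : Fin 3 → ℕ) : Type :=
  Unit ⊕ ((i : Fin 3) × Fin (a i - 1))

/-- Adjacency in the star-shaped diagram. -/
def starAdj (a : Fin 3 → ℕ) : starVertex a → starVertex a → Bool
  | Sum.inl _, Sum.inl _ => false
  | Sum.inl _, Sum.inr p => p.2.val == 0
  | Sum.inr p, Sum.inl _ => p.2.val == 0
  | Sum.inr p, Sum.inr p' =>
      p.1 == p'.1 && (p.2.val + 1 == p'.2.val || p'.2.val + 1 == p.2.val)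

/-- The Cartan matrix of the diagram `T_{a₁,a₂,a₃}`. -/
def starCartan (a : Fin 3 → ℕ) : Matrix (starVertex a) (starVertex a) ℤ :=
  fun x y => if x = y then 2 else if starAdj a x y then -1 else 0

namespace StarProof

variable (a : Fin 3 → ℕ)

/-- `pb a x y` : `x` is the parent of `y` (the neighbor of `y` towards the center). -/
def pb : starVertex a → starVertex a → Bool
  | Sum.inl _, Sum.inr p => p.2.val == 0
  | Sum.inr p, Sum.inr q => p.1 == q.1 && p.2.val + 1 == q.2.val
  | _, _ => false

lemma adj_eq (x y : starVertex a) : starAdj a x y = (pb a x y || pb a y x) := by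
  rcases x with _ | ⟨i, t⟩ <;> rcases y with _ | ⟨j, s⟩ <;>
    simp [starAdj, pb, Bool.beq_comm, Bool.and_or_distrib_left] <;>
    · constructor
      · rintro ⟨h1, h2⟩
        subst h1
        rcases h2 with h | h
        · left; exact ⟨rfl, h⟩
        · right; exact ⟨rfl, h⟩
      · rintro (⟨h1, h2⟩ | ⟨h1, h2⟩) <;> subst h1 <;> exact ⟨rfl, by omega⟩

lemma pb_irrefl (x : starVertex a) : pb a x x = false := by
  rcases x with _ | ⟨i, t⟩ <;> simp [pb]

lemma pb_asymm {x y : starVertex a} (h : pb a x y = true) : pb a y x = false := by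
  rcases x with _ | ⟨i, t⟩ <;> rcases y with _ | ⟨j, s⟩ <;> simp_all [pb] <;> omega

lemma pb_unique {x y z : starVertex a} (hx : pb a x z = true) (hy : pb a y z = true) :
    x = y := by
  rcases z with _ | ⟨k, u⟩
  · rcases x with _ | q <;> simp [pb] at hx
  rcases x with _ | ⟨i, t⟩ <;> rcases y with _ | ⟨j, s⟩ <;> simp [pb] at hx hy
  · rfl
  · obtain ⟨h1, h2⟩ := hy; omega
  · obtain ⟨h1, h2⟩ := hx; omega
  · obtain ⟨h1, h2⟩ := hx; obtain ⟨h3, h4⟩ := hy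
    subst h1; subst h3
    have : t = s := Fin.ext (by omega)
    rw [this]

lemma pb_target {x y : starVertex a} (h : pb a x y = true) :
    ∃ p, y = Sum.inr p := by
  rcases y with _ | p
  · rcases x with _ | q <;> simp [pb] at h
  · exact ⟨p, rfl⟩


/-- pivot values of the LDU factorization -/
def dq : starVertex a → ℚ
  | Sum.inl _ => 2 - ∑ i : Fin 3, ((a i : ℚ) - 1) / (a i)
  | Sum.inr p => ((a p.1 : ℚ) - p.2.val) / ((a p.1 : ℚ) - 1 - p.2.val)

lemma denom_pos (p : (i : Fin 3) × Fin (a i - 1)) :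
    0 < (a p.1 : ℚ) - 1 - p.2.val := by
  have h := p.2.isLt
  have h2 : 1 ≤ a p.1 := by omega
  have : ((p.2.val : ℚ)) < ((a p.1 - 1 : ℕ) : ℚ) := Nat.cast_lt.2 h
  rw [Nat.cast_sub h2, Nat.cast_one] at this
  linarith

lemma dq_pos (p : (i : Fin 3) × Fin (a i - 1)) : 0 < dq a (Sum.inr p) := by
  have h := denom_pos a p
  exact div_pos (by linarith) h

lemma dq_inr_ne (p : (i : Fin 3) × Fin (a i - 1)) : dq a (Sum.inr p) ≠ 0 :=
  ne_of_gt (dq_pos a p)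

def L : Matrix (starVertex a) (starVertex a) ℚ :=
  fun x y => if x = y then 1 else if pb a x y then -1 / dq a y else 0

def M : Matrix (starVertex a) (starVertex a) ℚ :=
  fun x y => if x = y then dq a x else if pb a y x then -1 else 0

lemma mul_apply_eq (x y : starVertex a) :
    (L a * M a) x y =
      M a x y + ∑ z, (if pb a x z then (-1 / dq a z) * M a z y else 0) := by
  rw [Matrix.mul_apply]
  have : ∀ z, L a x z * M a z y
      = (if z = x then M a x y else 0) + (if pb a x z then (-1 / dq a z) * M a z y else 0) := by
    intro z
    by_cases h : z = x
    · subst h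
      simp [L, pb_irrefl]
    · rw [L, if_neg (fun hh => h hh.symm), if_neg h]
      by_cases h2 : pb a x z <;> simp [h2]
  simp_rw [this, Finset.sum_add_distrib, Finset.sum_ite_eq' Finset.univ x, Finset.mem_univ,
    if_true]


lemma inner0 (ha : ∀ i, 0 < a i) (i : Fin 3) :
    ∑ t : Fin (a i - 1), (if (t : ℕ) = 0 then 1 / dq a (Sum.inr ⟨i, t⟩) else 0)
      = ((a i : ℚ) - 1) / (a i) := by
  by_cases h : a i - 1 = 0
  · rw [Finset.sum_eq_zero (fun t _ => absurd t.isLt (by omega))]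
    have : a i = 1 := by have := ha i; omega
    simp [this]
  · rw [Finset.sum_eq_single (⟨0, Nat.pos_of_ne_zero h⟩ : Fin (a i - 1))]
    · rw [if_pos rfl, dq]
      simp [one_div_div]
    · intro b _ hb
      rw [if_neg (fun hb0 => hb (Fin.ext hb0))]
    · intro hmem
      exact absurd (Finset.mem_univ _) hmem

lemma child_sum (ha : ∀ i, 0 < a i) (x : starVertex a) :
    ∑ z, (if pb a x z then 1 / dq a z else 0) = 2 - dq a x := by
  rcases x with _ | ⟨i, t⟩
  · rw [Fintype.sum_sum_type]
    have h1 : ∀ u : Unit, (if pb a (Sum.inl ()) (Sum.inl u) then 1 / dq a (Sum.inl u) else 0) = 0 := by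
      intro u; simp [pb]
    simp_rw [h1, Finset.sum_const, smul_zero, zero_add]
    rw [← Finset.univ_sigma_univ, Finset.sum_sigma]
    have h2 : ∀ i : Fin 3, ∑ t : Fin (a i - 1),
        (if pb a (Sum.inl ()) (Sum.inr ⟨i, t⟩) then 1 / dq a (Sum.inr ⟨i, t⟩) else 0)
        = ((a i : ℚ) - 1) / (a i) := by
      intro j
      rw [← inner0 a ha j]
      apply Finset.sum_congr rfl
      intro t _
      congr 1
      simp [pb]
    simp_rw [h2]
    rw [dq]
    ring
  · have hA := denom_pos a ⟨i, t⟩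
    rw [Fintype.sum_sum_type]
    have h1 : ∀ u : Unit, (if pb a (Sum.inr ⟨i, t⟩) (Sum.inl u) then
        1 / dq a (Sum.inl u) else 0) = 0 := by
      intro u; simp [pb]
    simp_rw [h1, Finset.sum_const, smul_zero, zero_add]
    by_cases h : t.val + 1 < a i - 1
    · rw [Finset.sum_eq_single (⟨i, ⟨t.val + 1, h⟩⟩ : (j : Fin 3) × Fin (a j - 1))]
      · rw [if_pos (by simp [pb])]
        simp only [dq]
        rw [one_div_div]
        push_cast
        have hu : (a i : ℚ) - 1 - ((t : ℕ) : ℚ) ≠ 0 := ne_of_gt hA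
        have hlt : ((t : ℕ) : ℚ) + 2 < (a i : ℚ) := by
          have h2 : t.val + 2 < a i := by omega
          have := (Nat.cast_lt (α := ℚ)).2 h2
          push_cast at this
          linarith
        have hu2 : (a i : ℚ) - (((t : ℕ) : ℚ) + 1) ≠ 0 := ne_of_gt (by linarith)
        field_simp
        ring
      · intro b _ hb
        rw [if_neg]
        intro hpb
        apply hb
        simp only [pb, Bool.and_eq_true, beq_iff_eq] at hpb
        obtain ⟨e1, e2⟩ := hpb
        subst e1
        exact Sigma.ext rfl (heq_of_eq (Fin.ext e2.symm))
      · intro hmem; exact absurd (Finset.mem_univ _) hmem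
    · rw [Finset.sum_eq_zero]
      · have ht : t.val + 1 = a i - 1 := by have := t.isLt; omega
        have h2 : 1 ≤ a i := by omega
        have htQ : ((t : ℕ) : ℚ) = (a i : ℚ) - 2 := by
          have : ((t.val + 1 : ℕ) : ℚ) = ((a i - 1 : ℕ) : ℚ) := by rw [ht]
          rw [Nat.cast_sub h2, Nat.cast_one] at this
          push_cast at this
          linarith
        rw [dq, htQ]
        have : (a i : ℚ) - ((a i : ℚ) - 2) = 2 := by ring
        rw [this]
        have : (a i : ℚ) - 1 - ((a i : ℚ) - 2) = 1 := by ring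
        rw [this]
        norm_num
      · intro p _
        rw [if_neg]
        intro hpb
        simp only [pb, Bool.and_eq_true, beq_iff_eq] at hpb
        obtain ⟨e1, e2⟩ := hpb
        subst e1
        have := p.2.isLt
        omega

lemma factor (ha : ∀ i, 0 < a i) :
    (starCartan a).map ((↑·) : ℤ → ℚ) = L a * M a := by
  funext x y
  rw [Matrix.map_apply, mul_apply_eq]
  by_cases hxy : x = y
  · subst hxy
    have hs : ∀ z, (if pb a x z then (-1 / dq a z) * M a z x else 0)
        = (if pb a x z then 1 / dq a z else 0) := by
      intro z
      by_cases h : pb a x z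
      · have hz : z ≠ x := by
          intro e; subst e; rw [pb_irrefl] at h; exact absurd h (by simp)
        obtain ⟨p, rfl⟩ := pb_target a h
        rw [if_pos h, if_pos h, M]
        rw [if_neg hz, if_pos h]
        field_simp
      · simp [h]
    simp_rw [hs]
    rw [child_sum a ha x, starCartan, M]
    simp
  · have hs : ∀ z, (if pb a x z then (-1 / dq a z) * M a z y else 0)
        = (if z = y then (if pb a x y then (-1 : ℚ) else 0) else 0) := by
      intro z
      by_cases h : pb a x z
      · by_cases hzy : z = y
        · subst hzy
          obtain ⟨p, rfl⟩ := pb_target a h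
          rw [if_pos h, if_pos rfl, if_pos h, M, if_pos rfl]
          rw [div_mul_eq_mul_div, div_eq_iff (dq_inr_ne a p)]
        · rw [if_pos h, if_neg hzy, M, if_neg hzy]
          rw [if_neg, mul_zero]
          intro hyz
          exact hxy (pb_unique a h hyz)
      · rw [if_neg h]
        by_cases hzy : z = y
        · subst hzy
          rw [if_pos rfl, if_neg h]
        · rw [if_neg hzy]
    simp_rw [hs]
    rw [Finset.sum_ite_eq' Finset.univ y, if_pos (Finset.mem_univ y)]
    rw [starCartan, if_neg hxy, adj_eq, M, if_neg hxy]
    by_cases h1 : pb a x y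
    · rw [pb_asymm a h1]
      simp [h1]
    · by_cases h2 : pb a y x <;> simp [h1, h2]


def key : starVertex a → ℕ ×ₗ ℕ
  | Sum.inl _ => toLex (a 0 + a 1 + a 2, 0)
  | Sum.inr ⟨i, t⟩ => toLex (a i - 1 - t.val, i.val)

lemma hbound : ∀ j : Fin 3, a j ≤ a 0 + a 1 + a 2 := by
  intro j
  have h := Finset.single_le_sum (f := a) (fun i _ => Nat.zero_le _) (Finset.mem_univ j)
  rwa [Fin.sum_univ_three] at h

lemma key_inj (ha : ∀ i, 0 < a i) : Function.Injective (key a) := by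
  intro x y h
  rcases x with _ | ⟨i, t⟩ <;> rcases y with _ | ⟨j, s⟩ <;>
    simp only [key, toLex_inj, Prod.mk.injEq] at h
  · rfl
  · exfalso
    have := hbound a j
    have := s.isLt
    have h0 := ha 0; have h1 := ha 1; have h2 := ha 2
    omega
  · exfalso
    have := hbound a i
    have := t.isLt
    have h0 := ha 0; have h1 := ha 1; have h2 := ha 2
    omega
  · obtain ⟨h1, h2⟩ := h
    have hij : i = j := Fin.ext h2
    subst hij
    have : t = s := Fin.ext (by have := t.isLt; have := s.isLt; omega)
    rw [this]

lemma key_lt (ha : ∀ i, 0 < a i) {x y : starVertex a} (h : pb a x y = true) :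
    key a y < key a x := by
  rcases x with _ | ⟨i, t⟩ <;> rcases y with _ | ⟨j, s⟩ <;> simp only [pb] at h
  · exact absurd h (by simp)
  · rw [key, key, Prod.Lex.lt_iff]
    left
    simp only [ofLex_toLex]
    have := hbound a j
    have := s.isLt
    have h0 := ha 0; have h1 := ha 1; have h2 := ha 2
    omega
  · exact absurd h (by simp)
  · simp only [Bool.and_eq_true, beq_iff_eq] at h
    obtain ⟨h1, h2⟩ := h
    subst h1
    rw [key, key, Prod.Lex.lt_iff]
    left
    simp only [ofLex_toLex]
    have := t.isLt
    omega

lemma det_tri {n α R : Type*} [Fintype n] [DecidableEq n] [CommRing R] [LinearOrder α]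
    (N : Matrix n n R) (b : n → α) (hb : Function.Injective b)
    (h : N.BlockTriangular b) : N.det = ∏ x, N x x := by
  classical
  rw [h.det, Finset.prod_image (fun x _ y _ e => hb e)]
  apply Finset.prod_congr rfl
  intro x _
  letI : Unique {y // b y = b x} := ⟨⟨⟨x, rfl⟩⟩, fun z => Subtype.ext (hb z.2)⟩
  rw [Matrix.det_unique]
  have hd : ((default : {y // b y = b x}) : n) = x := rfl
  simp [Matrix.toSquareBlock_def, hd]

lemma det_LM (ha : ∀ i, 0 < a i) :
    ((starCartan a).map ((↑·) : ℤ → ℚ)).det = ∏ x, dq a x := by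
  rw [factor a ha, Matrix.det_mul]
  have hL : (L a).BlockTriangular (OrderDual.toDual ∘ key a) := by
    intro x y hxy
    have hyx : key a x < key a y := hxy
    rw [L, if_neg, if_neg]
    · intro hpb
      exact absurd (hyx.trans (key_lt a ha hpb)) (lt_irrefl _)
    · rintro rfl
      exact absurd hyx (lt_irrefl _)
  have hM : (M a).BlockTriangular (key a) := by
    intro x y hxy
    rw [M, if_neg, if_neg]
    · intro hpb
      exact absurd (hxy.trans (key_lt a ha hpb)) (lt_irrefl _)
    · rintro rfl
      exact absurd hxy (lt_irrefl _)
  rw [det_tri (L a) _ (OrderDual.toDual.injective.comp (key_inj a ha)) hL,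
    det_tri (M a) _ (key_inj a ha) hM]
  have : ∀ x, L a x x = 1 := fun x => by rw [L, if_pos rfl]
  simp only [this, Finset.prod_const_one, one_mul]
  exact Finset.prod_congr rfl fun x _ => by rw [M, if_pos rfl]

lemma telescope : ∀ k : ℕ, ∏ t : Fin k, (((k : ℚ) + 1 - t) / ((k : ℚ) - t)) = (k : ℚ) + 1
  | 0 => by simp
  | (n + 1) => by
    rw [Fin.prod_univ_succ]
    have h2 : ∀ t : Fin n,
        (((n + 1 : ℕ) : ℚ) + 1 - ((t.succ : ℕ) : ℚ)) / (((n + 1 : ℕ) : ℚ) - ((t.succ : ℕ) : ℚ))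
          = ((n : ℚ) + 1 - ((t : ℕ) : ℚ)) / ((n : ℚ) - ((t : ℕ) : ℚ)) := by
      intro t
      have hv : ((t.succ : ℕ) : ℚ) = ((t : ℕ) : ℚ) + 1 := by
        rw [Fin.val_succ]; push_cast; ring
      rw [hv]
      push_cast
      congr 1 <;> ring
    rw [Finset.prod_congr rfl (fun t _ => h2 t), telescope n]
    have h0 : (((0 : Fin (n + 1)) : ℕ) : ℚ) = 0 := by simp
    rw [h0]
    have hn : (n : ℚ) + 1 ≠ 0 := by positivity
    push_cast
    field_simp
    try ring

lemma leg_prod (ha : ∀ i, 0 < a i) (i : Fin 3) :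
    ∏ t : Fin (a i - 1), dq a (Sum.inr ⟨i, t⟩) = (a i : ℚ) := by
  have hcast : (a i : ℚ) = ((a i - 1 : ℕ) : ℚ) + 1 := by
    have hk : a i = (a i - 1) + 1 := by have := ha i; omega
    rw [hk]; push_cast; ring
  rw [hcast, ← telescope (a i - 1)]
  apply Finset.prod_congr rfl
  intro t _
  show ((a i : ℚ) - t) / ((a i : ℚ) - 1 - t) = _
  rw [hcast]
  congr 1 <;> ring

lemma prod_dq (ha : ∀ i, 0 < a i) :
    ∏ x, dq a x = (a 1 : ℚ) * a 2 + (a 0 : ℚ) * a 2 + (a 0 : ℚ) * a 1 -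
      (a 0 : ℚ) * a 1 * a 2 := by
  rw [Fintype.prod_sum_type]
  have h1 : ∏ u : Unit, dq a (Sum.inl u) = 2 - ∑ i : Fin 3, ((a i : ℚ) - 1) / (a i) := by
    rw [Fintype.prod_unique]
    rfl
  rw [h1, ← Finset.univ_sigma_univ, Finset.prod_sigma]
  have h2 : ∀ j : Fin 3, ∏ t : Fin (a j - 1), dq a (Sum.inr ⟨j, t⟩) = (a j : ℚ) :=
    leg_prod a ha
  simp only [h2]
  have hne : ∀ i : Fin 3, (a i : ℚ) ≠ 0 := fun i => Nat.cast_ne_zero.2 (ha i).ne'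
  rw [Fin.sum_univ_three, Fin.prod_univ_three]
  have h0 := hne 0; have hb1 := hne 1; have hb2 := hne 2
  field_simp
  ring


lemma det_q (ha : ∀ i, 0 < a i) :
    (((starCartan a).det : ℤ) : ℚ) = (a 1 : ℚ) * a 2 + (a 0 : ℚ) * a 2 + (a 0 : ℚ) * a 1 -
      (a 0 : ℚ) * a 1 * a 2 := by
  have h := RingHom.map_det (Int.castRingHom ℚ) (starCartan a)
  rw [show (Int.castRingHom ℚ).mapMatrix (starCartan a)
      = (starCartan a).map ((↑·) : ℤ → ℚ) from rfl, det_LM a ha, prod_dq a ha] at h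
  exact h

end StarProof

theorem stmt_14 (a : Fin 3 → ℕ) (ha : ∀ i, 0 < a i) :
    (starCartan a).det =
      (a 1 : ℤ) * a 2 + (a 0 : ℤ) * a 2 + (a 0 : ℤ) * a 1 -
        (a 0 : ℤ) * a 1 * a 2 ∧
    ((starCartan a).det ≠ 0 ↔
      (1 : ℚ) / a 0 + 1 / a 1 + 1 / a 2 - 1 ≠ 0) := by
  have hq := StarProof.det_q a ha
  have hZ : (starCartan a).det = (a 1 : ℤ) * a 2 + (a 0 : ℤ) * a 2 + (a 0 : ℤ) * a 1 -
      (a 0 : ℤ) * a 1 * a 2 := by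
    have hcast : (((a 1 : ℤ) * a 2 + (a 0 : ℤ) * a 2 + (a 0 : ℤ) * a 1 -
        (a 0 : ℤ) * a 1 * a 2 : ℤ) : ℚ)
        = (a 1 : ℚ) * a 2 + (a 0 : ℚ) * a 2 + (a 0 : ℚ) * a 1 - (a 0 : ℚ) * a 1 * a 2 := by
      push_cast; ring
    exact Int.cast_injective (hq.trans hcast.symm)
  refine ⟨hZ, ?_⟩
  rw [hZ]
  have hne : ∀ i : Fin 3, (a i : ℚ) ≠ 0 := fun i => Nat.cast_ne_zero.2 (ha i).ne'
  rw [← Int.cast_ne_zero (α := ℚ)]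
  have hfac : (((a 1 : ℤ) * a 2 + (a 0 : ℤ) * a 2 + (a 0 : ℤ) * a 1 -
      (a 0 : ℤ) * a 1 * a 2 : ℤ) : ℚ)
      = ((a 0 : ℚ) * a 1 * a 2) * ((1 : ℚ) / a 0 + 1 / a 1 + 1 / a 2 - 1) := by
    have h0 := hne 0; have h1 := hne 1; have h2 := hne 2
    push_cast
    field_simp
  rw [hfac]
  constructor
  · exact fun h => (mul_ne_zero_iff.1 h).2
  · intro h
    exact mul_ne_zero (mul_ne_zero (mul_ne_zero (hne 0) (hne 1)) (hne 2)) h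
end

section
/- Let a_1 ≤ a_2 ≤ a_3 be positive integers with χ_A = 1/a_1 + 1/a_2 + 1/a_3 - 1 < 0, and consider the formal power series expansion of 1/(−f_A) with f_A = x_1^{a_1}+x_2^{a_2}+x_3^{a_3} - q^{-1}x_1x_2x_3, expanded as (q/(x_1x_2x_3))·Σ_{n≥0} (q(x_1^{a_1}+x_2^{a_2}+x_3^{a_3})/(x_1x_2x_3))^n. Then the constant term (coefficient of x_1^0 x_2^0 x_3^0 after multiplying by q^{-1} x_1 x_2 x_3) equals 1; equivalently, for all n ≥ 1, the Laurent polynomial ((x_1^{a_1}+x_2^{a_2}+x_3^{a_3})/(x_1x_2x_3))^n has zero constant term. -/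
open MvPolynomial in
theorem stmt_17 (a : Fin 3 → ℕ) (ha : ∀ i, 0 < a i)
    (hχ : (1 : ℚ) / a 0 + 1 / a 1 + 1 / a 2 < 1) (n : ℕ) (hn : 1 ≤ n) :
    MvPolynomial.coeff
      (Finsupp.single (0 : Fin 3) n + Finsupp.single 1 n + Finsupp.single 2 n)
      ((X 0 ^ a 0 + X 1 ^ a 1 + X 2 ^ a 2 : MvPolynomial (Fin 3) ℂ) ^ n) = 0 := by
  have h0 := ha 0
  have h1 := ha 1
  have h2 := ha 2
  set w : Fin 3 → ℕ := ![a 1 * a 2, a 0 * a 2, a 0 * a 1] with hw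
  set L : ℕ := a 0 * a 1 * a 2 with hL
  -- key inequality
  have hkey : a 1 * a 2 + a 0 * a 2 + a 0 * a 1 < L := by
    have h0' : (0 : ℚ) < (a 0 : ℚ) := by exact_mod_cast h0
    have h1' : (0 : ℚ) < (a 1 : ℚ) := by exact_mod_cast h1
    have h2' : (0 : ℚ) < (a 2 : ℚ) := by exact_mod_cast h2
    have : ((a 1 * a 2 + a 0 * a 2 + a 0 * a 1 : ℕ) : ℚ) < ((L : ℕ) : ℚ) := by
      rw [hL]
      push_cast
      rw [div_add_div _ _ (ne_of_gt h0') (ne_of_gt h1'), div_add_div _ _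
        (by positivity) (ne_of_gt h2'), div_lt_one (by positivity)] at hχ
      nlinarith [hχ]
    exact_mod_cast this
  have hXpow : ∀ i : Fin 3, MvPolynomial.IsWeightedHomogeneous w
      ((X i ^ a i : MvPolynomial (Fin 3) ℂ)) (a i * w i) := by
    intro i
    have hX := MvPolynomial.isWeightedHomogeneous_X ℂ w i
    have : ∀ k : ℕ, MvPolynomial.IsWeightedHomogeneous w
        ((X i : MvPolynomial (Fin 3) ℂ) ^ k) (k * w i) := by
      intro k
      induction k with
      | zero => simpa using MvPolynomial.isWeightedHomogeneous_one ℂ w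
      | succ m ih =>
        have := ih.mul hX
        rw [pow_succ]
        convert this using 1
        ring
    exact this (a i)
  have hdeg : ∀ i : Fin 3, a i * w i = L := by
    intro i
    fin_cases i <;> simp [hw, hL] <;> ring
  have hf : MvPolynomial.IsWeightedHomogeneous w
      ((X 0 ^ a 0 + X 1 ^ a 1 + X 2 ^ a 2 : MvPolynomial (Fin 3) ℂ)) L := by
    have H0 := hXpow 0; have H1 := hXpow 1; have H2 := hXpow 2
    rw [hdeg 0] at H0; rw [hdeg 1] at H1; rw [hdeg 2] at H2
    exact (H0.add H1).add H2
  have hfn : MvPolynomial.IsWeightedHomogeneous w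
      ((X 0 ^ a 0 + X 1 ^ a 1 + X 2 ^ a 2 : MvPolynomial (Fin 3) ℂ) ^ n) (n * L) := by
    clear hn
    induction n with
    | zero => simpa using MvPolynomial.isWeightedHomogeneous_one ℂ w
    | succ m ih =>
      have := ih.mul hf
      rw [pow_succ]
      convert this using 1
      ring
  apply hfn.coeff_eq_zero
  have hs : ∀ i : Fin 3, Finsupp.weight w (Finsupp.single i n) = n * w i := by
    intro i
    simp [Finsupp.weight_apply, Finsupp.sum_single_index]
  have hwt : Finsupp.weight w (Finsupp.single (0 : Fin 3) n + Finsupp.single 1 n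
      + Finsupp.single 2 n) = n * (a 1 * a 2 + a 0 * a 2 + a 0 * a 1) := by
    rw [map_add, map_add, hs, hs, hs]
    simp [hw]
    ring
  rw [hwt]
  have : n * (a 1 * a 2 + a 0 * a 2 + a 0 * a 1) < n * L :=
    Nat.mul_lt_mul_of_pos_left hkey (by omega : 0 < n)
  omega
end
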